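/- arXiv:1207.6750 — 2 statements merged into one kernel-verified Lean document; each statement's English description precedes it below -/
import Mathlib

section
/- Let A be an N×N matrix with deg det(I - A·z) = N - r and deg sum(adj(I - A·z)) = N - 1 - s where s > r. Then the order of vanishing at z = 0 of sum(adj(A - I·z)) is strictly greater than that of det(A - I·z), so the rational function sum(adj(A - I·z))/det(A - I·z) vanishes at z = 0 (i.e., the series Euler characteristic is 0). -/
open Polynomial Matrix

/-- The sum of all the entries of a matrix. -/
def sumEntries {R : Type*} [AddCommMonoid R] {N : ℕ} (M : Matrix (Fin N) (Fin N) R) : R :=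
  ∑ i, ∑ j, M i j

/-- `det(I - A·z)`. -/
noncomputable def detIsubAz {N : ℕ} (A : Matrix (Fin N) (Fin N) ℚ) : ℚ[X] :=
  ((1 : Matrix (Fin N) (Fin N) ℚ[X]) - (X : ℚ[X]) • A.map C).det

/-- `det(A - I·z)`. -/
noncomputable def detAsubIz {N : ℕ} (A : Matrix (Fin N) (Fin N) ℚ) : ℚ[X] :=
  (A.map C - (X : ℚ[X]) • (1 : Matrix (Fin N) (Fin N) ℚ[X])).det

/-- `sum(adj(I - A·z))`. -/
noncomputable def sumAdjIsubAz {N : ℕ} (A : Matrix (Fin N) (Fin N) ℚ) : ℚ[X] :=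
  sumEntries (adjugate ((1 : Matrix (Fin N) (Fin N) ℚ[X]) - (X : ℚ[X]) • A.map C))

/-- `sum(adj(A - I·z))`. -/
noncomputable def sumAdjAsubIz {N : ℕ} (A : Matrix (Fin N) (Fin N) ℚ) : ℚ[X] :=
  sumEntries (adjugate (A.map C - (X : ℚ[X]) • (1 : Matrix (Fin N) (Fin N) ℚ[X])))

section Aux

open LaurentPolynomial

lemma toLaurent_eq_eval₂ (f : ℚ[X]) :
    Polynomial.toLaurent f = Polynomial.eval₂ LaurentPolynomial.C (T 1) f := by
  have h : (Polynomial.toLaurent : ℚ[X] →+* LaurentPolynomial ℚ)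
      = Polynomial.eval₂RingHom LaurentPolynomial.C (T 1) := by
    apply Polynomial.ringHom_ext <;> simp
  rw [show Polynomial.toLaurent f = (Polynomial.toLaurent : ℚ[X] →+* _) f from rfl, h,
    coe_eval₂RingHom]

lemma reflect_key (f : ℚ[X]) (n : ℕ) (hf : f.natDegree ≤ n) :
    Polynomial.toLaurent (reflect n f)
      = T (n : ℤ) * Polynomial.eval₂ LaurentPolynomial.C (T (-1)) f := by
  have h := Polynomial.eval₂_reflect_mul_pow (LaurentPolynomial.C : ℚ →+* LaurentPolynomial ℚ)
    (T (-1)) n f hf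
  simp only [invOf_T, neg_neg] at h
  rw [toLaurent_eq_eval₂, ← h, T_pow, mul_comm (T (n:ℤ)), mul_assoc, ← T_add]
  have hz : ((n : ℤ) * -1 + n : ℤ) = 0 := by ring
  rw [hz, T_zero, mul_one]

lemma sumEntries_map {R S : Type*} [CommRing R] [CommRing S] {N : ℕ}
    (f : R →+* S) (M : Matrix (Fin N) (Fin N) R) :
    sumEntries (M.map f) = f (sumEntries M) := by
  simp [sumEntries, Matrix.map_apply, map_sum]

lemma sumEntries_smul {R : Type*} [CommRing R] {N : ℕ} (c : R) (M : Matrix (Fin N) (Fin N) R) :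
    sumEntries (c • M) = c * sumEntries M := by
  simp [sumEntries, Finset.mul_sum, smul_eq_mul]

lemma mapA {N : ℕ} (A : Matrix (Fin N) (Fin N) ℚ) (f : ℚ[X] →+* LaurentPolynomial ℚ) :
    (A.map Polynomial.C - (X : ℚ[X]) • (1 : Matrix (Fin N) (Fin N) ℚ[X])).map f
      = A.map (f ∘ Polynomial.C) - f X • (1 : Matrix (Fin N) (Fin N) (LaurentPolynomial ℚ)) := by
  apply Matrix.ext
  intro i j
  by_cases h : i = j <;>
    simp [Matrix.map_apply, Matrix.sub_apply, Matrix.smul_apply, Matrix.one_apply, h,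
      smul_eq_mul, map_sub, _root_.map_mul, mul_comm (f X)]

lemma mapI {N : ℕ} (A : Matrix (Fin N) (Fin N) ℚ) (f : ℚ[X] →+* LaurentPolynomial ℚ) :
    ((1 : Matrix (Fin N) (Fin N) ℚ[X]) - (X : ℚ[X]) • A.map Polynomial.C).map f
      = (1 : Matrix (Fin N) (Fin N) (LaurentPolynomial ℚ))
        - f X • A.map (f ∘ Polynomial.C) := by
  apply Matrix.ext
  intro i j
  by_cases h : i = j <;>
    simp [Matrix.map_apply, Matrix.sub_apply, Matrix.smul_apply, Matrix.one_apply, h,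
      smul_eq_mul, map_sub, _root_.map_mul, mul_comm (f X)]

lemma key_smul {N : ℕ} (B : Matrix (Fin N) (Fin N) (LaurentPolynomial ℚ)) :
    B - (T 1 : LaurentPolynomial ℚ) • (1 : Matrix (Fin N) (Fin N) (LaurentPolynomial ℚ))
      = (-(T 1) : LaurentPolynomial ℚ) • ((1 : Matrix (Fin N) (Fin N) (LaurentPolynomial ℚ))
          - (T (-1) : LaurentPolynomial ℚ) • B) := by
  have hT : (T 1 : LaurentPolynomial ℚ) * T (-1) = 1 := by rw [← T_add]; norm_num
  rw [smul_sub, smul_smul, neg_mul, hT, neg_one_smul, sub_neg_eq_add, neg_smul]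
  abel

lemma comp_C_eq :
    ((Polynomial.toLaurent : ℚ[X] →+* LaurentPolynomial ℚ) ∘ (Polynomial.C : ℚ →+* ℚ[X]) :
        ℚ → LaurentPolynomial ℚ)
      = ((Polynomial.eval₂RingHom LaurentPolynomial.C (T (-1)) : ℚ[X] →+* LaurentPolynomial ℚ)
          ∘ (Polynomial.C : ℚ →+* ℚ[X]) : ℚ → LaurentPolynomial ℚ) := by
  funext a
  simp

lemma detA_reflect {N : ℕ} (A : Matrix (Fin N) (Fin N) ℚ) (h : (detIsubAz A).natDegree ≤ N) :
    detAsubIz A = (-1 : ℚ[X]) ^ N * reflect N (detIsubAz A) := by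
  set τ := (Polynomial.toLaurent : ℚ[X] →+* LaurentPolynomial ℚ) with hτdef
  set φ := (Polynomial.eval₂RingHom LaurentPolynomial.C (T (-1)) : ℚ[X] →+* LaurentPolynomial ℚ)
    with hφdef
  apply Polynomial.toLaurent_injective
  show τ _ = τ _
  rw [_root_.map_mul, map_pow, map_neg, _root_.map_one, reflect_key _ _ h]
  have h1 : τ (detAsubIz A) = ((A.map Polynomial.C
      - (X : ℚ[X]) • (1 : Matrix (Fin N) (Fin N) ℚ[X])).map τ).det := by
    rw [detAsubIz, RingHom.map_det, RingHom.mapMatrix_apply]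
  have h2 : Polynomial.eval₂ LaurentPolynomial.C (T (-1)) (detIsubAz A)
      = (((1 : Matrix (Fin N) (Fin N) ℚ[X]) - (X : ℚ[X]) • A.map Polynomial.C).map φ).det := by
    rw [show Polynomial.eval₂ LaurentPolynomial.C (T (-1)) (detIsubAz A) = φ (detIsubAz A) from
      rfl, detIsubAz, RingHom.map_det, RingHom.mapMatrix_apply]
  rw [h1, h2, mapA A τ, mapI A φ, show τ X = T 1 from Polynomial.toLaurent_X,
    show φ X = T (-1) from Polynomial.eval₂_X _ _, ← comp_C_eq, key_smul, det_smul]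
  rw [Fintype.card_fin, neg_pow, T_pow]
  have : ((N : ℤ) * 1) = (N : ℤ) := by ring
  rw [this, mul_assoc]

end Aux

section Aux2
open LaurentPolynomial

lemma sumAdj_reflect {N : ℕ} (A : Matrix (Fin N) (Fin N) ℚ)
    (h : (sumAdjIsubAz A).natDegree ≤ N - 1) :
    sumAdjAsubIz A = (-1 : ℚ[X]) ^ (N - 1) * reflect (N - 1) (sumAdjIsubAz A) := by
  set τ := (Polynomial.toLaurent : ℚ[X] →+* LaurentPolynomial ℚ) with hτdef
  set φ := (Polynomial.eval₂RingHom LaurentPolynomial.C (T (-1)) : ℚ[X] →+* LaurentPolynomial ℚ)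
    with hφdef
  apply Polynomial.toLaurent_injective
  show τ _ = τ _
  rw [_root_.map_mul, map_pow, map_neg, _root_.map_one, reflect_key _ _ h]
  have h1 : τ (sumAdjAsubIz A) = sumEntries (adjugate ((A.map Polynomial.C
      - (X : ℚ[X]) • (1 : Matrix (Fin N) (Fin N) ℚ[X])).map τ)) := by
    rw [sumAdjAsubIz, ← sumEntries_map, ← RingHom.mapMatrix_apply, RingHom.map_adjugate,
      RingHom.mapMatrix_apply]
  have h2 : Polynomial.eval₂ LaurentPolynomial.C (T (-1)) (sumAdjIsubAz A)
      = sumEntries (adjugate (((1 : Matrix (Fin N) (Fin N) ℚ[X])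
          - (X : ℚ[X]) • A.map Polynomial.C).map φ)) := by
    rw [show Polynomial.eval₂ LaurentPolynomial.C (T (-1)) (sumAdjIsubAz A)
        = φ (sumAdjIsubAz A) from rfl, sumAdjIsubAz, ← sumEntries_map, ← RingHom.mapMatrix_apply,
      RingHom.map_adjugate, RingHom.mapMatrix_apply]
  rw [h1, h2, mapA A τ, mapI A φ, show τ X = T 1 from Polynomial.toLaurent_X,
    show φ X = T (-1) from Polynomial.eval₂_X _ _, ← comp_C_eq, key_smul, adjugate_smul,
    sumEntries_smul, Fintype.card_fin, neg_pow, T_pow]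
  have : (((N - 1 : ℕ) : ℤ) * 1) = ((N - 1 : ℕ) : ℤ) := by ring
  rw [this, mul_assoc]

end Aux2

section Aux3

lemma ntd_reflect {f : ℚ[X]} {n : ℕ} (hf : f ≠ 0) (h : f.natDegree ≤ n) :
    (reflect n f).natTrailingDegree = n - f.natDegree := by
  apply le_antisymm
  · apply natTrailingDegree_le_of_ne_zero
    rw [coeff_reflect, revAt_le (Nat.sub_le _ _), Nat.sub_sub_self h]
    exact mt leadingCoeff_eq_zero.mp hf
  · apply le_natTrailingDegree (by simpa [reflect_eq_zero_iff] using hf)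
    intro m hm
    rw [coeff_reflect, revAt_le (le_trans (le_of_lt hm) (Nat.sub_le _ _))]
    apply coeff_eq_zero_of_natDegree_lt
    omega

lemma rm_neg_pow_mul (k : ℕ) (p : ℚ[X]) :
    ((-1 : ℚ[X]) ^ k * p).rootMultiplicity 0 = p.rootMultiplicity 0 := by
  rcases Nat.even_or_odd k with h | h
  · rw [h.neg_one_pow, one_mul]
  · rw [h.neg_one_pow, neg_one_mul, rootMultiplicity_eq_natTrailingDegree',
      rootMultiplicity_eq_natTrailingDegree', natTrailingDegree_neg]

lemma detIsubAz_ne_zero {N : ℕ} (A : Matrix (Fin N) (Fin N) ℚ) : detIsubAz A ≠ 0 := by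
  have h : (detIsubAz A).eval 0 = 1 := by
    have := (Polynomial.evalRingHom (0 : ℚ)).map_det
      ((1 : Matrix (Fin N) (Fin N) ℚ[X]) - (X : ℚ[X]) • A.map C)
    rw [detIsubAz, show Polynomial.eval (0:ℚ) (((1 : Matrix (Fin N) (Fin N) ℚ[X]) - (X : ℚ[X]) • A.map C).det) = (Polynomial.evalRingHom (0 : ℚ)) (((1 : Matrix (Fin N) (Fin N) ℚ[X]) - (X : ℚ[X]) • A.map C).det) from rfl, this, RingHom.mapMatrix_apply]
    have hM : ((1 : Matrix (Fin N) (Fin N) ℚ[X]) - (X : ℚ[X]) • A.map C).map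
        (Polynomial.evalRingHom (0 : ℚ)) = 1 := by
      apply Matrix.ext
      intro i j
      by_cases hij : i = j <;>
        simp [Matrix.map_apply, Matrix.sub_apply, Matrix.smul_apply, Matrix.one_apply, hij,
          smul_eq_mul]
    rw [hM, det_one]
  intro h0
  rw [h0] at h
  simp at h

end Aux3

/-- If `deg det(I - A·z) = N - r` and `deg sum(adj(I - A·z)) = N - 1 - s` with `s > r`,
then the order of vanishing at `z = 0` of `sum(adj(A - I·z))` is strictly greater than that
of `det(A - I·z)`, and the rational function `sum(adj(A - I·z))/det(A - I·z)` vanishes at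
`z = 0`. -/
theorem stmt7 {N : ℕ} (A : Matrix (Fin N) (Fin N) ℚ) (r s : ℕ)
    (hr : r ≤ N) (hN : 1 ≤ N) (hs : s ≤ N - 1) (hsr : r < s)
    (hdet : (detIsubAz A).natDegree = N - r)
    (hadj : (sumAdjIsubAz A).natDegree = N - 1 - s) (hadj0 : sumAdjIsubAz A ≠ 0) :
    (detAsubIz A).rootMultiplicity 0 < (sumAdjAsubIz A).rootMultiplicity 0 ∧
      RatFunc.eval (RingHom.id ℚ) 0 (RatFunc.mk (sumAdjAsubIz A) (detAsubIz A)) = 0 := by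
  have hI0 : detIsubAz A ≠ 0 := detIsubAz_ne_zero A
  have hdegle : (detIsubAz A).natDegree ≤ N := hdet ▸ Nat.sub_le _ _
  have hadjle : (sumAdjIsubAz A).natDegree ≤ N - 1 := hadj ▸ Nat.sub_le _ _
  have hq := detA_reflect A hdegle
  have hp := sumAdj_reflect A hadjle
  have hrq : (detAsubIz A).rootMultiplicity 0 = r := by
    rw [hq, rm_neg_pow_mul, rootMultiplicity_eq_natTrailingDegree', ntd_reflect hI0 hdegle, hdet]
    omega
  have hrp : (sumAdjAsubIz A).rootMultiplicity 0 = s := by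
    rw [hp, rm_neg_pow_mul, rootMultiplicity_eq_natTrailingDegree', ntd_reflect hadj0 hadjle, hadj]
    omega
  have hqne : detAsubIz A ≠ 0 := by
    rw [hq]
    exact mul_ne_zero (pow_ne_zero _ (by norm_num))
      (by rwa [Ne, reflect_eq_zero_iff])
  have hpne : sumAdjAsubIz A ≠ 0 := by
    rw [hp]
    exact mul_ne_zero (pow_ne_zero _ (by norm_num))
      (by rwa [Ne, reflect_eq_zero_iff])
  refine ⟨by rw [hrq, hrp]; exact hsr, ?_⟩
  set F := RatFunc.mk (sumAdjAsubIz A) (detAsubIz A) with hF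
  have hF' : F = algebraMap _ _ (sumAdjAsubIz A) / algebraMap _ _ (detAsubIz A) :=
    RatFunc.mk_eq_div _ _
  have hFne : F ≠ 0 := by
    rw [hF']
    exact div_ne_zero (RatFunc.algebraMap_ne_zero hpne) (RatFunc.algebraMap_ne_zero hqne)
  have hnum : F.num ≠ 0 := RatFunc.num_ne_zero hFne
  have hcross : F.num * detAsubIz A = sumAdjAsubIz A * F.denom := by
    apply RatFunc.algebraMap_injective ℚ
    rw [_root_.map_mul, _root_.map_mul]
    rw [← div_eq_div_iff (RatFunc.algebraMap_ne_zero (RatFunc.denom_ne_zero F))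
      (RatFunc.algebraMap_ne_zero hqne)]
    rw [RatFunc.num_div_denom, hF']
  have hrmeq : F.num.rootMultiplicity 0 + r = s + F.denom.rootMultiplicity 0 := by
    have h1 : (F.num * detAsubIz A).rootMultiplicity 0
        = F.num.rootMultiplicity 0 + (detAsubIz A).rootMultiplicity 0 :=
      rootMultiplicity_mul (mul_ne_zero hnum hqne)
    have h2 : (sumAdjAsubIz A * F.denom).rootMultiplicity 0
        = (sumAdjAsubIz A).rootMultiplicity 0 + F.denom.rootMultiplicity 0 :=
      rootMultiplicity_mul (mul_ne_zero hpne (RatFunc.denom_ne_zero F))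
    rw [← hrq, ← hrp, ← h1, ← h2, hcross]
  have hnum0 : 0 < F.num.rootMultiplicity 0 := by omega
  have hnumeval : F.num.eval 0 = 0 := (rootMultiplicity_pos hnum).mp hnum0
  have hdenom0 : F.denom.eval 0 ≠ 0 := by
    intro h0
    have hXd : (X : ℚ[X]) ∣ F.denom := by
      rw [Polynomial.X_dvd_iff, Polynomial.coeff_zero_eq_eval_zero]
      exact h0
    have hXn : (X : ℚ[X]) ∣ F.num := by
      rw [Polynomial.X_dvd_iff, Polynomial.coeff_zero_eq_eval_zero]
      exact hnumeval
    obtain ⟨a, b, hab⟩ := RatFunc.isCoprime_num_denom F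
    have hX1 : (X : ℚ[X]) ∣ 1 := hab ▸ dvd_add (hXn.mul_left a) (hXd.mul_left b)
    simpa [Polynomial.X_dvd_iff] using hX1
  show RatFunc.eval (RingHom.id ℚ) 0 F = 0
  rw [RatFunc.eval, Polynomial.eval₂_eq_eval_map, Polynomial.map_id, hnumeval, zero_div]
end

section
/- In the setting of the previous statement, the coefficient m_{N-2-r} of z^{N-2-r} in sum(adj(I - A·z)·A) equals -N·d_{N-1-r} if s > r, and equals -N·d_{N-1-r} + k_{N-1-r} if s = r. -/
open Polynomial Matrix

/-- `sum(adj(I - A·z)·A)`. -/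
noncomputable def sumAdjIsubAzA {N : ℕ} (A : Matrix (Fin N) (Fin N) ℚ) : ℚ[X] :=
  sumEntries (adjugate ((1 : Matrix (Fin N) (Fin N) ℚ[X]) - (X : ℚ[X]) • A.map C) * A.map C)

lemma key_id {N : ℕ} (A : Matrix (Fin N) (Fin N) ℚ) :
    X * sumAdjIsubAzA A = sumAdjIsubAz A - (N : ℚ[X]) * detIsubAz A := by
  set M := (1 : Matrix (Fin N) (Fin N) ℚ[X]) - (X : ℚ[X]) • A.map C with hM
  have h2 : (X : ℚ[X]) • (adjugate M * A.map C) = adjugate M - M.det • (1 : Matrix (Fin N) (Fin N) ℚ[X]) := by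
    rw [← Matrix.mul_smul, ← Matrix.adjugate_mul M]
    have hx : (X : ℚ[X]) • A.map C = 1 - M := by rw [hM]; abel
    rw [hx, Matrix.mul_sub, Matrix.mul_one]
  have h3 := congrArg sumEntries h2
  have hL : sumEntries ((X : ℚ[X]) • (adjugate M * A.map C)) = X * sumAdjIsubAzA A := by
    simp [sumEntries, sumAdjIsubAzA, Finset.mul_sum, hM]
  have hR : sumEntries (adjugate M - M.det • (1 : Matrix (Fin N) (Fin N) ℚ[X]))
      = sumAdjIsubAz A - (N : ℚ[X]) * detIsubAz A := by
    simp [sumEntries, sumAdjIsubAz, detIsubAz, hM, Matrix.sub_apply, Finset.sum_sub_distrib,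
      Matrix.smul_apply, Matrix.one_apply, mul_comm]
  rw [hL, hR] at h3
  exact h3

/-- If `deg det(I - A·z) = N - r` and `deg sum(adj(I - A·z)) = N - 1 - s` with `s ≥ r`, then
`m_{N-2-r} = -N·d_{N-1-r}` if `s > r`, and `m_{N-2-r} = -N·d_{N-1-r} + k_{N-1-r}` if `s = r`. -/
theorem stmt10 {N : ℕ} (A : Matrix (Fin N) (Fin N) ℚ) (r s : ℕ)
    (hr : r + 2 ≤ N) (hs : s ≤ N - 1) (hrs : r ≤ s)
    (hdet : (detIsubAz A).natDegree = N - r)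
    (hadj : (sumAdjIsubAz A).natDegree = N - 1 - s) (hadj0 : sumAdjIsubAz A ≠ 0) :
    (r < s →
        (sumAdjIsubAzA A).coeff (N - 2 - r) = - (N : ℚ) * (detIsubAz A).coeff (N - 1 - r)) ∧
      (s = r →
        (sumAdjIsubAzA A).coeff (N - 2 - r)
          = - (N : ℚ) * (detIsubAz A).coeff (N - 1 - r) + (sumAdjIsubAz A).coeff (N - 1 - r)) := by
  have hn : N - 1 - r = (N - 2 - r) + 1 := by omega
  have hc := congrArg (fun p => p.coeff (N - 1 - r)) (key_id A)
  simp only [hn, Polynomial.coeff_X_mul, Polynomial.coeff_sub] at hc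
  have hcN : ((N : ℚ[X]) * detIsubAz A).coeff ((N - 2 - r) + 1)
      = (N : ℚ) * (detIsubAz A).coeff ((N - 2 - r) + 1) := by
    simp
  rw [hcN] at hc
  constructor
  · intro hlt
    have hz : (sumAdjIsubAz A).coeff ((N - 2 - r) + 1) = 0 := by
      apply Polynomial.coeff_eq_zero_of_natDegree_lt
      omega
    rw [hz] at hc
    rw [hn, hc]; ring
  · intro hse
    rw [hn, hc]; ring
end
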